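/- Let p, m, T, d be positive integers and let Y ∈ ℝ^{p×T}, Z ∈ ℝ^{m×T}, E ∈ ℝ^{p×T}, A ∈ ℝ^{p×m}, and for i = 1,…,d let P_i ∈ ℝ^{p×T} and Φ_i ∈ ℝ^{p×p}, with Y = A·Z + Σ_{i=1}^d Φ_i·P_i + E. Let λ_A > 0 satisfy λ_A ≥ (3/T)·‖E·Zᵀ‖₂ and λ_i > 0 satisfy λ_i ≥ (2/T)·‖E·P_iᵀ‖₂, define L(A',Φ'_1,…,Φ'_d) = (1/(2T))·‖Y − A'·Z − Σ_i Φ'_i·P_i‖_F² + λ_A·‖A'‖_* + Σ_i λ_i·‖Φ'_i‖_*, and suppose Â, Φ̂_1,…,Φ̂_d satisfy L(Â,Φ̂_1,…,Φ̂_d) ≤ L(A,Φ_1,…,Φ_d). For the error Δ_A = Â − A, let Δ_{A,2} be its projection onto the subspace orthogonal to the row and column spaces of A (that is, Δ_{A,2} = U_c·U_cᵀ·Δ_A·V_c·V_cᵀ, where [U_k U_c] and [V_k V_c] are orthogonal and A = U_k·D·V_kᵀ for some square matrix D), and let Δ_{A,1} = Δ_A − Δ_{A,2}; define Δ_{i,1},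 Δ_{i,2} analogously for Δ_i = Φ̂_i − Φ_i relative to Φ_i. Then λ_A·‖Δ_{A,2}‖_* + Σ_{i=1}^d λ_i·‖Δ_{i,2}‖_* ≤ 3·λ_A·‖Δ_{A,1}‖_* + 3·Σ_{i=1}^d λ_i·‖Δ_{i,1}‖_*. -/

import Mathlib

open Matrix

/-- Frobenius norm of a real matrix: `(tr(MᵀM))^{1/2}`. -/
noncomputable def frobNorm {m n : ℕ} (M : Matrix (Fin m) (Fin n) ℝ) : ℝ :=
  Real.sqrt ((Mᵀ * M).trace)

/-- Nuclear norm of a real matrix: the trace of the positive semidefinite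
square root of `MᵀM` (= sum of singular values). -/
noncomputable def nuclearNorm {m n : ℕ} (M : Matrix (Fin m) (Fin n) ℝ) : ℝ :=
  ((Matrix.posSemidef_conjTranspose_mul_self M).1.eigenvectorUnitary.1
    * diagonal (Real.sqrt ∘ (Matrix.posSemidef_conjTranspose_mul_self M).1.eigenvalues)
    * (star (Matrix.posSemidef_conjTranspose_mul_self M).1.eigenvectorUnitary : Matrix (Fin n) (Fin n) ℝ)).trace

/-- Spectral (ℓ2 → ℓ2 operator) norm of a real matrix: its largest singular value. -/
noncomputable def opNorm {m n : ℕ} (M : Matrix (Fin m) (Fin n) ℝ) : ℝ :=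
  ‖LinearMap.toContinuousLinearMap (Matrix.toEuclideanLin M)‖

/-- The ℓ1 norm of the vectorization of a matrix. -/
noncomputable def vecL1 {m n : ℕ} (M : Matrix (Fin m) (Fin n) ℝ) : ℝ :=
  ∑ i, ∑ j, |M i j|

/-- The ℓ∞ norm of the vectorization of a matrix. -/
noncomputable def vecLinf {m n : ℕ} (M : Matrix (Fin m) (Fin n) ℝ) : ℝ :=
  ⨆ i, ⨆ j, |M i j|

/-- Frobenius (trace) inner product of two matrices. -/
noncomputable def traceInner {m n : ℕ} (M N : Matrix (Fin m) (Fin n) ℝ) : ℝ :=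
  (Mᵀ * N).trace

open scoped Classical in
/-- The inverse of the positive semidefinite square root of a positive semidefinite
matrix (junk value `0` if the matrix is not positive semidefinite). -/
noncomputable def matInvSqrt {r : ℕ} (S : Matrix (Fin r) (Fin r) ℝ) :
    Matrix (Fin r) (Fin r) ℝ :=
  if h : S.PosSemidef then (h.1.eigenvectorUnitary.1 * diagonal (Real.sqrt ∘ h.1.eigenvalues)
    * (star h.1.eigenvectorUnitary : Matrix (Fin r) (Fin r) ℝ))⁻¹ else 0

noncomputable def Matrix.PosSemidef.sqrt {r : ℕ} {S : Matrix (Fin r) (Fin r) ℝ} (h : S.PosSemidef) :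
    Matrix (Fin r) (Fin r) ℝ :=
  h.1.eigenvectorUnitary.1 * diagonal (Real.sqrt ∘ h.1.eigenvalues)
    * (star h.1.eigenvectorUnitary : Matrix (Fin r) (Fin r) ℝ)

section psdsqrt
open scoped MatrixOrder

lemma Matrix.PosSemidef.sqrt_eq_cfc {r : ℕ} {S : Matrix (Fin r) (Fin r) ℝ} (h : S.PosSemidef) :
    h.sqrt = CFC.sqrt S := by
  rw [CFC.sqrt_eq_real_sqrt S (Matrix.nonneg_iff_posSemidef.mpr h), cfcₙ_eq_cfc, h.1.cfc_eq]
  simp [Matrix.IsHermitian.cfc, Matrix.PosSemidef.sqrt]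

lemma Matrix.PosSemidef.posSemidef_sqrt {r : ℕ} {S : Matrix (Fin r) (Fin r) ℝ}
    (h : S.PosSemidef) : h.sqrt.PosSemidef := by
  rw [h.sqrt_eq_cfc]
  exact Matrix.nonneg_iff_posSemidef.mp (CFC.sqrt_nonneg S)

lemma Matrix.PosSemidef.sqrt_mul_self {r : ℕ} {S : Matrix (Fin r) (Fin r) ℝ}
    (h : S.PosSemidef) : h.sqrt * h.sqrt = S := by
  rw [h.sqrt_eq_cfc]
  exact CFC.sqrt_mul_sqrt_self S (Matrix.nonneg_iff_posSemidef.mpr h)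

lemma Matrix.PosSemidef.eq_sqrt_of_sq_eq {r : ℕ} {B S : Matrix (Fin r) (Fin r) ℝ}
    (hB : B.PosSemidef) (h : S.PosSemidef) (hsq : B ^ 2 = S) : B = h.sqrt := by
  rw [h.sqrt_eq_cfc]
  exact (CFC.sqrt_unique (by rw [← sq]; exact hsq) (Matrix.nonneg_iff_posSemidef.mpr hB)).symm

end psdsqrt

lemma nuclearNorm_eq_sqrt {m n : ℕ} (M : Matrix (Fin m) (Fin n) ℝ) :
    nuclearNorm M = (Matrix.posSemidef_conjTranspose_mul_self M).sqrt.trace := rfl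



-- dot product norm
noncomputable def dnorm {n : ℕ} (x : Fin n → ℝ) : ℝ := Real.sqrt (x ⬝ᵥ x)

lemma dnorm_eq_norm {n : ℕ} (x : Fin n → ℝ) :
    dnorm x = ‖(WithLp.equiv 2 (Fin n → ℝ)).symm x‖ := by
  rw [EuclideanSpace.norm_eq, dnorm]
  congr 1
  simp [dotProduct, sq]

lemma dot_CS {n : ℕ} (x y : Fin n → ℝ) : x ⬝ᵥ y ≤ dnorm x * dnorm y := by
  have h := real_inner_le_norm ((WithLp.equiv 2 (Fin n → ℝ)).symm x)
      ((WithLp.equiv 2 (Fin n → ℝ)).symm y)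
  rw [← dnorm_eq_norm, ← dnorm_eq_norm] at h
  refine le_trans (le_of_eq ?_) h
  simp [real_inner_comm]
  simp [EuclideanSpace.inner_toLp_toLp, dotProduct_comm]



lemma opNorm_nonneg' {m n : ℕ} (M : Matrix (Fin m) (Fin n) ℝ) : 0 ≤ opNorm M :=
  norm_nonneg _

lemma dnorm_mulVec_le {m n : ℕ} (M : Matrix (Fin m) (Fin n) ℝ) (x : Fin n → ℝ) :
    dnorm (M *ᵥ x) ≤ opNorm M * dnorm x := by
  have h := (LinearMap.toContinuousLinearMap (Matrix.toEuclideanLin M)).le_opNorm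
      ((WithLp.equiv 2 (Fin n → ℝ)).symm x)
  rw [dnorm_eq_norm, dnorm_eq_norm]
  simpa [opNorm, Matrix.toEuclideanLin_apply] using h

lemma opNorm_le_of_bound {m n : ℕ} (M : Matrix (Fin m) (Fin n) ℝ) {c : ℝ} (hc : 0 ≤ c)
    (h : ∀ x, dnorm (M *ᵥ x) ≤ c * dnorm x) : opNorm M ≤ c := by
  apply ContinuousLinearMap.opNorm_le_bound _ hc
  intro y
  have := h ((WithLp.equiv 2 (Fin n → ℝ)) y)
  rw [dnorm_eq_norm, dnorm_eq_norm] at this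
  simpa [Matrix.toEuclideanLin_apply] using this

section svd
variable {p n : ℕ} (M : Matrix (Fin p) (Fin n) ℝ)

lemma dot_mulVec_mulVec (u w : Fin n → ℝ) :
    (M *ᵥ u) ⬝ᵥ (M *ᵥ w) = u ⬝ᵥ ((Mᴴ * M) *ᵥ w) := by
  rw [← mulVec_mulVec, dotProduct_mulVec u]
  congr 1
  ext i
  simp [vecMul, mulVec, dotProduct, conjTranspose_apply, mul_comm]

noncomputable def svdVecs : Fin n → (Fin n → ℝ) := fun k =>
  ⇑((Matrix.posSemidef_conjTranspose_mul_self M).1.eigenvectorBasis k)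

lemma svdVecs_ortho (j k : Fin n) :
    svdVecs M j ⬝ᵥ svdVecs M k = if j = k then 1 else 0 := by
  have h := (Matrix.posSemidef_conjTranspose_mul_self M).1.eigenvectorBasis.orthonormal
  rw [orthonormal_iff_ite] at h
  have := h j k
  rw [← this]
  rw [EuclideanSpace.inner_eq_star_dotProduct, dotProduct_comm]
  rfl

lemma svdVecs_eig (k : Fin n) :
    (Mᴴ * M) *ᵥ svdVecs M k =
      ((Matrix.posSemidef_conjTranspose_mul_self M).1.eigenvalues k) • svdVecs M k :=
  (Matrix.posSemidef_conjTranspose_mul_self M).1.mulVec_eigenvectorBasis k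

lemma svdVecs_resolution : ∑ k, vecMulVec (svdVecs M k) (svdVecs M k) = 1 := by
  have h := Matrix.mem_unitaryGroup_iff.mp
    (Matrix.posSemidef_conjTranspose_mul_self M).1.eigenvectorUnitary.2
  ext i j
  have h2 : ((Matrix.posSemidef_conjTranspose_mul_self M).1.eigenvectorUnitary.1 *
      star (Matrix.posSemidef_conjTranspose_mul_self M).1.eigenvectorUnitary.1) i j
      = (1 : Matrix (Fin n) (Fin n) ℝ) i j := by rw [h]
  simp only [Matrix.mul_apply, Matrix.star_apply, star_trivial,
    Matrix.IsHermitian.eigenvectorUnitary_apply] at h2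
  simpa [Matrix.sum_apply, vecMulVec_apply, svdVecs, mul_comm] using h2


lemma svdVecs_dot_self (k : Fin n) :
    (M *ᵥ svdVecs M k) ⬝ᵥ (M *ᵥ svdVecs M k)
      = (Matrix.posSemidef_conjTranspose_mul_self M).1.eigenvalues k := by
  rw [dot_mulVec_mulVec, svdVecs_eig, dotProduct_smul, smul_eq_mul, svdVecs_ortho]
  simp

lemma svdVecs_dot (j k : Fin n) :
    (M *ᵥ svdVecs M j) ⬝ᵥ (M *ᵥ svdVecs M k)
      = if j = k then (M *ᵥ svdVecs M j) ⬝ᵥ (M *ᵥ svdVecs M j) else 0 := by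
  rcases eq_or_ne j k with rfl | hjk
  · simp
  · rw [dot_mulVec_mulVec, svdVecs_eig, dotProduct_smul, smul_eq_mul, svdVecs_ortho]
    simp [hjk]

lemma nuclearNorm_eq_sum : nuclearNorm M = ∑ k, dnorm (M *ᵥ svdVecs M k) := by
  unfold nuclearNorm
  rw [Matrix.trace_mul_cycle]
  rw [Matrix.mem_unitaryGroup_iff'.mp
    (SetLike.coe_mem (Matrix.posSemidef_conjTranspose_mul_self M).1.eigenvectorUnitary)]
  simp only [Matrix.one_mul, Matrix.trace_diagonal, Function.comp_apply]
  refine Finset.sum_congr rfl fun k _ => ?_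
  rw [dnorm, svdVecs_dot_self]

lemma nuclearNorm_nonneg : 0 ≤ nuclearNorm M := by
  rw [nuclearNorm_eq_sum]
  exact Finset.sum_nonneg fun k _ => Real.sqrt_nonneg _

end svd

section traceinner

variable {p n : ℕ}

lemma traceInner_vecMulVec (N : Matrix (Fin p) (Fin n) ℝ) (u : Fin p → ℝ) (w : Fin n → ℝ) :
    traceInner N (vecMulVec u w) = (N *ᵥ w) ⬝ᵥ u := by
  unfold traceInner
  simp [Matrix.trace, Matrix.mul_apply, Matrix.diag, vecMulVec_apply, dotProduct, mulVec,
    Finset.mul_sum, Finset.sum_mul, mul_comm, mul_left_comm]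
  rw [Finset.sum_comm]

lemma matrix_eq_sum_vecMulVec (M : Matrix (Fin p) (Fin n) ℝ) :
    M = ∑ k, vecMulVec (M *ᵥ svdVecs M k) (svdVecs M k) := by
  have h : M * (∑ k, vecMulVec (svdVecs M k) (svdVecs M k)) = M := by
    rw [svdVecs_resolution M, Matrix.mul_one]
  conv_lhs => rw [← h]
  rw [Matrix.mul_sum]
  refine Finset.sum_congr rfl fun k _ => ?_
  ext i j
  simp [Matrix.mul_apply, vecMulVec_apply, mulVec, dotProduct, Finset.sum_mul, mul_assoc]

lemma traceInner_eq_sum (N M : Matrix (Fin p) (Fin n) ℝ) :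
    traceInner N M = ∑ k, (N *ᵥ svdVecs M k) ⬝ᵥ (M *ᵥ svdVecs M k) := by
  conv_lhs => rw [matrix_eq_sum_vecMulVec M]
  unfold traceInner
  rw [Matrix.mul_sum, Matrix.trace_sum]
  refine Finset.sum_congr rfl fun k _ => ?_
  exact traceInner_vecMulVec N (M *ᵥ svdVecs M k) (svdVecs M k)

lemma traceInner_le (N M : Matrix (Fin p) (Fin n) ℝ) :
    traceInner N M ≤ opNorm N * nuclearNorm M := by
  rw [traceInner_eq_sum, nuclearNorm_eq_sum, Finset.mul_sum]
  refine Finset.sum_le_sum fun k _ => ?_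
  calc (N *ᵥ svdVecs M k) ⬝ᵥ (M *ᵥ svdVecs M k)
      ≤ dnorm (N *ᵥ svdVecs M k) * dnorm (M *ᵥ svdVecs M k) := dot_CS _ _
    _ ≤ (opNorm N * dnorm (svdVecs M k)) * dnorm (M *ᵥ svdVecs M k) := by
        exact mul_le_mul_of_nonneg_right (dnorm_mulVec_le N _) (Real.sqrt_nonneg _)
    _ = opNorm N * dnorm (M *ᵥ svdVecs M k) := by
        have : dnorm (svdVecs M k) = 1 := by
          rw [dnorm, svdVecs_ortho]; simp
        rw [this]; ring
end traceinner


section dual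
variable {p n : ℕ}

lemma sum_mulVec' {K : ℕ} (A : Fin K → Matrix (Fin p) (Fin n) ℝ) (x : Fin n → ℝ) :
    (∑ k, A k) *ᵥ x = ∑ k, (A k *ᵥ x) := by
  ext i
  simp only [mulVec, dotProduct, Matrix.sum_apply, Finset.sum_apply, Finset.sum_mul]
  rw [Finset.sum_comm]

lemma dotProduct_sum' {K : ℕ} (x : Fin p → ℝ) (f : Fin K → (Fin p → ℝ)) :
    x ⬝ᵥ (∑ k, f k) = ∑ k, x ⬝ᵥ f k := by
  simp only [dotProduct, Finset.sum_apply, Finset.mul_sum]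
  rw [Finset.sum_comm]

lemma sum_dotProduct' {K : ℕ} (x : Fin p → ℝ) (f : Fin K → (Fin p → ℝ)) :
    (∑ k, f k) ⬝ᵥ x = ∑ k, f k ⬝ᵥ x := by
  rw [dotProduct_comm, dotProduct_sum']
  simp_rw [dotProduct_comm x]

lemma dot_self_nonneg (x : Fin n → ℝ) : 0 ≤ x ⬝ᵥ x :=
  Finset.sum_nonneg fun i _ => mul_self_nonneg _

lemma dnorm_mul_self (x : Fin n → ℝ) : dnorm x * dnorm x = x ⬝ᵥ x :=
  Real.mul_self_sqrt (dot_self_nonneg x)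

lemma vecMulVec_mulVec' (u : Fin p → ℝ) (w x : Fin n → ℝ) :
    vecMulVec u w *ᵥ x = (w ⬝ᵥ x) • u := by
  ext i
  simp [mulVec, vecMulVec_apply, dotProduct, Finset.sum_mul, mul_assoc, smul_eq_mul, mul_comm,
    Finset.mul_sum, mul_left_comm]

noncomputable def dualMat (M : Matrix (Fin p) (Fin n) ℝ) : Matrix (Fin p) (Fin n) ℝ :=
  ∑ k, (if dnorm (M *ᵥ svdVecs M k) = 0 then 0 else (dnorm (M *ᵥ svdVecs M k))⁻¹) •
    vecMulVec (M *ᵥ svdVecs M k) (svdVecs M k)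

lemma dualMat_mulVec (M : Matrix (Fin p) (Fin n) ℝ) (x : Fin n → ℝ) :
    dualMat M *ᵥ x = ∑ k,
      ((if dnorm (M *ᵥ svdVecs M k) = 0 then 0 else (dnorm (M *ᵥ svdVecs M k))⁻¹)
        * (svdVecs M k ⬝ᵥ x)) • (M *ᵥ svdVecs M k) := by
  unfold dualMat
  rw [sum_mulVec']
  refine Finset.sum_congr rfl fun k _ => ?_
  rw [Matrix.smul_mulVec, vecMulVec_mulVec', smul_smul]

lemma dualMat_mulVec_svd (M : Matrix (Fin p) (Fin n) ℝ) (j : Fin n) :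
    dualMat M *ᵥ svdVecs M j =
      (if dnorm (M *ᵥ svdVecs M j) = 0 then 0 else (dnorm (M *ᵥ svdVecs M j))⁻¹)
        • (M *ᵥ svdVecs M j) := by
  rw [dualMat_mulVec]
  rw [Finset.sum_eq_single j]
  · rw [svdVecs_ortho]; simp
  · intro k _ hkj
    rw [svdVecs_ortho]
    simp [hkj]
  · simp

lemma traceInner_dualMat (M : Matrix (Fin p) (Fin n) ℝ) :
    traceInner (dualMat M) M = nuclearNorm M := by
  rw [traceInner_eq_sum, nuclearNorm_eq_sum]
  refine Finset.sum_congr rfl fun k _ => ?_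
  rw [dualMat_mulVec_svd, smul_dotProduct, smul_eq_mul]
  by_cases h : dnorm (M *ᵥ svdVecs M k) = 0
  · have : (M *ᵥ svdVecs M k) ⬝ᵥ (M *ᵥ svdVecs M k) = 0 := by
      rw [← dnorm_mul_self, h, mul_zero]
    simp [h, this]
  · rw [if_neg h, ← dnorm_mul_self, ← mul_assoc, inv_mul_cancel₀ h, one_mul]

lemma sum_dot_sq (x : Fin n → ℝ) (M : Matrix (Fin p) (Fin n) ℝ) :
    ∑ k, (svdVecs M k ⬝ᵥ x) * (svdVecs M k ⬝ᵥ x) = x ⬝ᵥ x := by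
  have h : (∑ k, vecMulVec (svdVecs M k) (svdVecs M k)) *ᵥ x = x := by
    rw [svdVecs_resolution M, Matrix.one_mulVec]
  have h2 : x ⬝ᵥ ((∑ k, vecMulVec (svdVecs M k) (svdVecs M k)) *ᵥ x) = x ⬝ᵥ x := by rw [h]
  rw [← h2, sum_mulVec', dotProduct_sum']
  refine Finset.sum_congr rfl fun k _ => ?_
  rw [vecMulVec_mulVec', dotProduct_smul, smul_eq_mul, dotProduct_comm x]

lemma opNorm_dualMat_le (M : Matrix (Fin p) (Fin n) ℝ) : opNorm (dualMat M) ≤ 1 := by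
  refine opNorm_le_of_bound _ zero_le_one fun x => ?_
  rw [one_mul]
  have hsq : (dualMat M *ᵥ x) ⬝ᵥ (dualMat M *ᵥ x) ≤ x ⬝ᵥ x := by
    rw [dualMat_mulVec, dotProduct_sum']
    simp only [sum_dotProduct']
    have heach : ∀ k, (∑ j, (((if dnorm (M *ᵥ svdVecs M j) = 0 then 0
          else (dnorm (M *ᵥ svdVecs M j))⁻¹) * (svdVecs M j ⬝ᵥ x)) •
            (M *ᵥ svdVecs M j)) ⬝ᵥ
          (((if dnorm (M *ᵥ svdVecs M k) = 0 then 0 else (dnorm (M *ᵥ svdVecs M k))⁻¹)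
            * (svdVecs M k ⬝ᵥ x)) • (M *ᵥ svdVecs M k)))
          ≤ (svdVecs M k ⬝ᵥ x) * (svdVecs M k ⬝ᵥ x) := by
      intro k
      rw [Finset.sum_eq_single k]
      · rw [smul_dotProduct, dotProduct_smul, smul_eq_mul, smul_eq_mul]
        by_cases h : dnorm (M *ᵥ svdVecs M k) = 0
        · have : (M *ᵥ svdVecs M k) ⬝ᵥ (M *ᵥ svdVecs M k) = 0 := by
            rw [← dnorm_mul_self, h, mul_zero]
          rw [this]
          simp [mul_self_nonneg]
        · rw [if_neg h, ← dnorm_mul_self]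
          have hd : 0 < dnorm (M *ᵥ svdVecs M k) :=
            lt_of_le_of_ne (Real.sqrt_nonneg _) (Ne.symm h)
          field_simp
          exact le_rfl
      · intro j _ hjk
        rw [smul_dotProduct, dotProduct_smul, svdVecs_dot M j k, if_neg hjk]
        simp
      · simp
    calc ∑ k, _ ≤ ∑ k, (svdVecs M k ⬝ᵥ x) * (svdVecs M k ⬝ᵥ x) :=
            Finset.sum_le_sum fun k _ => heach k
      _ = x ⬝ᵥ x := sum_dot_sq x M
  unfold dnorm
  exact Real.sqrt_le_sqrt hsq

lemma nuclearNorm_triangle (X Y : Matrix (Fin p) (Fin n) ℝ) :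
    nuclearNorm (X + Y) ≤ nuclearNorm X + nuclearNorm Y := by
  have hadd : traceInner (dualMat (X + Y)) (X + Y)
      = traceInner (dualMat (X + Y)) X + traceInner (dualMat (X + Y)) Y := by
    unfold traceInner
    rw [Matrix.mul_add, Matrix.trace_add]
  have h1 : traceInner (dualMat (X + Y)) X ≤ nuclearNorm X :=
    le_trans (traceInner_le _ _)
      (mul_le_of_le_one_left (nuclearNorm_nonneg X) (opNorm_dualMat_le _))
  have h2 : traceInner (dualMat (X + Y)) Y ≤ nuclearNorm Y :=
    le_trans (traceInner_le _ _)
      (mul_le_of_le_one_left (nuclearNorm_nonneg Y) (opNorm_dualMat_le _))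
  rw [← traceInner_dualMat (X + Y), hadd]
  exact add_le_add h1 h2

end dual

section decomp
variable {a b : ℕ}

lemma eq_zero_of_trace_conjTranspose_mul_self (M : Matrix (Fin a) (Fin b) ℝ)
    (h : (Mᴴ * M).trace = 0) : M = 0 := by
  have hexp : (Mᴴ * M).trace = ∑ j, ∑ i, M i j * M i j := by
    simp [Matrix.trace, Matrix.diag, Matrix.mul_apply, Matrix.conjTranspose_apply]
  rw [hexp] at h
  have hz : ∀ j ∈ Finset.univ, ∀ i ∈ Finset.univ, M i j * M i j = 0 := by
    have := (Finset.sum_eq_zero_iff_of_nonneg (fun j _ =>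
      Finset.sum_nonneg fun i _ => mul_self_nonneg (M i j))).mp h
    intro j hj i hi
    exact (Finset.sum_eq_zero_iff_of_nonneg fun i _ => mul_self_nonneg (M i j)).mp (this j hj) i hi
  ext i j
  simpa using mul_self_eq_zero.mp (hz j (Finset.mem_univ j) i (Finset.mem_univ i))

lemma sqrt_mul_sqrt_eq_zero {X Y : Matrix (Fin a) (Fin a) ℝ}
    (hX : X.PosSemidef) (hY : Y.PosSemidef) (hXY : X * Y = 0) :
    hX.sqrt * hY.sqrt = 0 := by
  apply eq_zero_of_trace_conjTranspose_mul_self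
  have h1 : (hX.sqrt * hY.sqrt)ᴴ = hY.sqrt * hX.sqrt := by
    rw [Matrix.conjTranspose_mul, hX.posSemidef_sqrt.1, hY.posSemidef_sqrt.1]
  rw [h1]
  have h2 : hY.sqrt * hX.sqrt * (hX.sqrt * hY.sqrt) = hY.sqrt * X * hY.sqrt := by
    rw [Matrix.mul_assoc, ← Matrix.mul_assoc hX.sqrt, hX.sqrt_mul_self, ← Matrix.mul_assoc]
  have hYX : Y * X = 0 := by
    have := congrArg Matrix.conjTranspose hXY
    rwa [Matrix.conjTranspose_mul, hX.1, hY.1, Matrix.conjTranspose_zero] at this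
  rw [h2, Matrix.trace_mul_cycle, hY.sqrt_mul_self, hYX, Matrix.trace_zero]

lemma sqrt_add_of_mul_eq_zero {X Y : Matrix (Fin a) (Fin a) ℝ}
    (hX : X.PosSemidef) (hY : Y.PosSemidef) (hXY : X * Y = 0) :
    (hX.add hY).sqrt = hX.sqrt + hY.sqrt := by
  have hYX : Y * X = 0 := by
    have := congrArg Matrix.conjTranspose hXY
    rwa [Matrix.conjTranspose_mul, hX.1, hY.1, Matrix.conjTranspose_zero] at this
  have h1 : hX.sqrt * hY.sqrt = 0 := sqrt_mul_sqrt_eq_zero hX hY hXY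
  have h2 : hY.sqrt * hX.sqrt = 0 := sqrt_mul_sqrt_eq_zero hY hX hYX
  have hsq : (hX.sqrt + hY.sqrt) ^ 2 = X + Y := by
    rw [pow_two, Matrix.add_mul, Matrix.mul_add, Matrix.mul_add, hX.sqrt_mul_self,
      hY.sqrt_mul_self, h1, h2]
    abel
  exact ((hX.posSemidef_sqrt.add hY.posSemidef_sqrt).eq_sqrt_of_sq_eq (hX.add hY) hsq).symm

lemma sqrt_congr {X Y : Matrix (Fin a) (Fin a) ℝ} (hX : X.PosSemidef) (hY : Y.PosSemidef)
    (h : X = Y) : hX.sqrt = hY.sqrt := by subst h; rfl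

lemma nuclearNorm_decomp (A B : Matrix (Fin a) (Fin b) ℝ)
    (h1 : Aᴴ * B = 0) (h2 : A * Bᴴ = 0) :
    nuclearNorm (A + B) = nuclearNorm A + nuclearNorm B := by
  have h1' : Bᴴ * A = 0 := by
    have := congrArg Matrix.conjTranspose h1
    rwa [Matrix.conjTranspose_mul, Matrix.conjTranspose_conjTranspose,
      Matrix.conjTranspose_zero] at this
  have hXY : (Aᴴ * A) * (Bᴴ * B) = 0 := by
    rw [Matrix.mul_assoc, ← Matrix.mul_assoc A, h2, Matrix.zero_mul, Matrix.mul_zero]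
  have hsum : (A + B)ᴴ * (A + B) = Aᴴ * A + Bᴴ * B := by
    rw [Matrix.conjTranspose_add, Matrix.add_mul, Matrix.mul_add, Matrix.mul_add, h1, h1']
    abel
  simp only [nuclearNorm_eq_sqrt]
  rw [sqrt_congr (Matrix.posSemidef_conjTranspose_mul_self (A + B))
    ((Matrix.posSemidef_conjTranspose_mul_self A).add
      (Matrix.posSemidef_conjTranspose_mul_self B)) hsum,
    sqrt_add_of_mul_eq_zero _ _ hXY, Matrix.trace_add]

end decomp

section frob
variable {a b c : ℕ}

noncomputable def fsq (M : Matrix (Fin a) (Fin b) ℝ) : ℝ := (Mᵀ * M).trace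

lemma fsq_nonneg (M : Matrix (Fin a) (Fin b) ℝ) : 0 ≤ fsq M := by
  unfold fsq
  have : (Mᵀ * M).trace = ∑ j, ∑ i, M i j * M i j := by
    simp [Matrix.trace, Matrix.diag, Matrix.mul_apply, Matrix.transpose_apply]
  rw [this]
  exact Finset.sum_nonneg fun j _ => Finset.sum_nonneg fun i _ => mul_self_nonneg _

lemma frobNorm_sq (M : Matrix (Fin a) (Fin b) ℝ) :
    Real.sqrt ((Mᵀ * M).trace) ^ 2 = fsq M :=
  Real.sq_sqrt (fsq_nonneg M)

lemma traceInner_symm (X Y : Matrix (Fin a) (Fin b) ℝ) :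
    (Xᵀ * Y).trace = (Yᵀ * X).trace := by
  rw [← Matrix.trace_transpose (Yᵀ * X), Matrix.transpose_mul, Matrix.transpose_transpose]

lemma fsq_sub (X W : Matrix (Fin a) (Fin b) ℝ) :
    fsq (X - W) = fsq X - 2 * (Xᵀ * W).trace + fsq W := by
  unfold fsq
  rw [Matrix.transpose_sub, Matrix.sub_mul, Matrix.mul_sub, Matrix.mul_sub, Matrix.trace_sub,
    Matrix.trace_sub, Matrix.trace_sub, traceInner_symm W X]
  ring

lemma trace_shift (E : Matrix (Fin a) (Fin b) ℝ) (Δ : Matrix (Fin a) (Fin c) ℝ)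
    (Z : Matrix (Fin c) (Fin b) ℝ) :
    (Eᵀ * (Δ * Z)).trace = ((E * Zᵀ)ᵀ * Δ).trace := by
  rw [Matrix.transpose_mul, Matrix.transpose_transpose, ← Matrix.mul_assoc,
    Matrix.trace_mul_cycle]

lemma conjT_eq_transpose (M : Matrix (Fin a) (Fin b) ℝ) : Mᴴ = Mᵀ := by
  ext i j
  simp [Matrix.conjTranspose_apply]

lemma nuclearNorm_neg (M : Matrix (Fin a) (Fin b) ℝ) :
    nuclearNorm (-M) = nuclearNorm M := by
  simp only [nuclearNorm_eq_sqrt]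
  rw [sqrt_congr (Matrix.posSemidef_conjTranspose_mul_self (-M))
    (Matrix.posSemidef_conjTranspose_mul_self M) (by simp)]

lemma nuclearNorm_sub_le (X Y : Matrix (Fin a) (Fin b) ℝ) :
    nuclearNorm X - nuclearNorm Y ≤ nuclearNorm (X + Y) := by
  have h := nuclearNorm_triangle (X + Y) (-Y)
  simp only [add_neg_cancel_right] at h
  rw [nuclearNorm_neg] at h
  linarith

end frob

section orth
variable {pp mm kk c1 c2 : ℕ}

lemma ortho_pair (A Δ2 ΔB : Matrix (Fin pp) (Fin mm) ℝ)
    (Uk : Matrix (Fin pp) (Fin kk) ℝ) (Uc : Matrix (Fin pp) (Fin c1) ℝ)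
    (Vk : Matrix (Fin mm) (Fin kk) ℝ) (Vc : Matrix (Fin mm) (Fin c2) ℝ)
    (D : Matrix (Fin kk) (Fin kk) ℝ)
    (hUkc : Ukᵀ * Uc = 0) (hVkc : Vkᵀ * Vc = 0)
    (hA : A = Uk * D * Vkᵀ) (hΔ2 : Δ2 = Uc * Ucᵀ * ΔB * Vc * Vcᵀ) :
    Aᴴ * Δ2 = 0 ∧ A * Δ2ᴴ = 0 := by
  constructor
  · rw [conjT_eq_transpose, hA, hΔ2]
    have h0 : ∀ (X : Matrix (Fin c1) (Fin mm) ℝ), Ukᵀ * (Uc * X) = 0 := fun X => by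
      rw [← Matrix.mul_assoc, hUkc, Matrix.zero_mul]
    simp only [Matrix.transpose_mul, Matrix.transpose_transpose, Matrix.mul_assoc]
    rw [h0]
    simp
  · rw [conjT_eq_transpose, hA, hΔ2]
    have h0 : ∀ (X : Matrix (Fin c2) (Fin pp) ℝ), Vkᵀ * (Vc * X) = 0 := fun X => by
      rw [← Matrix.mul_assoc, hVkc, Matrix.zero_mul]
    simp only [Matrix.transpose_mul, Matrix.transpose_transpose, Matrix.mul_assoc]
    rw [h0]
    simp

lemma nuclear_lower (A Δ2 Δ1 Ah : Matrix (Fin pp) (Fin mm) ℝ)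
    (h1 : Aᴴ * Δ2 = 0) (h2 : A * Δ2ᴴ = 0) (hAh : Ah = A + Δ2 + Δ1) :
    nuclearNorm A + nuclearNorm Δ2 - nuclearNorm Δ1 ≤ nuclearNorm Ah := by
  have hdec : nuclearNorm (A + Δ2) = nuclearNorm A + nuclearNorm Δ2 :=
    nuclearNorm_decomp A Δ2 h1 h2
  have htri := nuclearNorm_sub_le (A + Δ2) Δ1
  rw [hdec] at htri
  rw [hAh]
  linarith

end orth

lemma frobNorm_sq' {a b : ℕ} (M : Matrix (Fin a) (Fin b) ℝ) :
    frobNorm M ^ 2 = fsq M := Real.sq_sqrt (fsq_nonneg M)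

set_option maxHeartbeats 2000000 in
/-- Cone membership in the proof of Theorem 4 for the integrative reduced-rank
estimator. -/
theorem stmt_8
    (p m T d : ℕ) (hp : 0 < p) (hm : 0 < m) (hT : 0 < T) (hd : 0 < d)
    (Y E : Matrix (Fin p) (Fin T) ℝ) (Z : Matrix (Fin m) (Fin T) ℝ)
    (P : Fin d → Matrix (Fin p) (Fin T) ℝ)
    (A Ah : Matrix (Fin p) (Fin m) ℝ)
    (Φ Φh : Fin d → Matrix (Fin p) (Fin p) ℝ)
    (hmodel : Y = A * Z + (∑ i, Φ i * P i) + E)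
    (lA : ℝ) (l : Fin d → ℝ) (hlA0 : 0 < lA) (hl0 : ∀ i, 0 < l i)
    (hlA : lA ≥ 3 / (T : ℝ) * opNorm (E * Zᵀ))
    (hl : ∀ i, l i ≥ 2 / (T : ℝ) * opNorm (E * (P i)ᵀ))
    (hopt :
      (1 / (2 * (T : ℝ))) * frobNorm (Y - Ah * Z - ∑ i, Φh i * P i) ^ 2
          + lA * nuclearNorm Ah + ∑ i, l i * nuclearNorm (Φh i)
        ≤ (1 / (2 * (T : ℝ))) * frobNorm (Y - A * Z - ∑ i, Φ i * P i) ^ 2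
          + lA * nuclearNorm A + ∑ i, l i * nuclearNorm (Φ i))
    -- SVD-induced decomposition for `A`
    (kA : ℕ)
    (UkA : Matrix (Fin p) (Fin kA) ℝ) (UcA : Matrix (Fin p) (Fin (p - kA)) ℝ)
    (VkA : Matrix (Fin m) (Fin kA) ℝ) (VcA : Matrix (Fin m) (Fin (m - kA)) ℝ)
    (hUkA : UkAᵀ * UkA = 1) (hUcA : UcAᵀ * UcA = 1) (hUkcA : UkAᵀ * UcA = 0)
    (hUfullA : UkA * UkAᵀ + UcA * UcAᵀ = 1)
    (hVkA : VkAᵀ * VkA = 1) (hVcA : VcAᵀ * VcA = 1) (hVkcA : VkAᵀ * VcA = 0)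
    (hVfullA : VkA * VkAᵀ + VcA * VcAᵀ = 1)
    (DA : Matrix (Fin kA) (Fin kA) ℝ) (hAdec : A = UkA * DA * VkAᵀ)
    (ΔA1 ΔA2 : Matrix (Fin p) (Fin m) ℝ)
    (hΔA2 : ΔA2 = UcA * UcAᵀ * (Ah - A) * VcA * VcAᵀ) (hΔA1 : ΔA1 = (Ah - A) - ΔA2)
    -- SVD-induced decompositions for each `Φ i`
    (k : Fin d → ℕ)
    (Uk : ∀ i, Matrix (Fin p) (Fin (k i)) ℝ) (Uc : ∀ i, Matrix (Fin p) (Fin (p - k i)) ℝ)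
    (Vk : ∀ i, Matrix (Fin p) (Fin (k i)) ℝ) (Vc : ∀ i, Matrix (Fin p) (Fin (p - k i)) ℝ)
    (hUk : ∀ i, (Uk i)ᵀ * Uk i = 1) (hUc : ∀ i, (Uc i)ᵀ * Uc i = 1)
    (hUkc : ∀ i, (Uk i)ᵀ * Uc i = 0)
    (hUfull : ∀ i, Uk i * (Uk i)ᵀ + Uc i * (Uc i)ᵀ = 1)
    (hVk : ∀ i, (Vk i)ᵀ * Vk i = 1) (hVc : ∀ i, (Vc i)ᵀ * Vc i = 1)
    (hVkc : ∀ i, (Vk i)ᵀ * Vc i = 0)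
    (hVfull : ∀ i, Vk i * (Vk i)ᵀ + Vc i * (Vc i)ᵀ = 1)
    (D : ∀ i, Matrix (Fin (k i)) (Fin (k i)) ℝ)
    (hΦdec : ∀ i, Φ i = Uk i * D i * (Vk i)ᵀ)
    (Δ1 Δ2 : Fin d → Matrix (Fin p) (Fin p) ℝ)
    (hΔ2 : ∀ i, Δ2 i = Uc i * (Uc i)ᵀ * (Φh i - Φ i) * Vc i * (Vc i)ᵀ)
    (hΔ1 : ∀ i, Δ1 i = (Φh i - Φ i) - Δ2 i) :
    lA * nuclearNorm ΔA2 + ∑ i, l i * nuclearNorm (Δ2 i)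
      ≤ 3 * lA * nuclearNorm ΔA1 + 3 * ∑ i, l i * nuclearNorm (Δ1 i) := by
  classical
  have hT' : (0:ℝ) < (T:ℝ) := by exact_mod_cast hT
  -- model algebra
  have hE : Y - A * Z - ∑ i, Φ i * P i = E := by rw [hmodel]; abel
  have hsubsum : ∑ i, (Φh i - Φ i) * P i = (∑ i, Φh i * P i) - ∑ i, Φ i * P i := by
    rw [← Finset.sum_sub_distrib]
    exact Finset.sum_congr rfl fun i _ => Matrix.sub_mul _ _ _
  set W := (Ah - A) * Z + ∑ i, (Φh i - Φ i) * P i with hW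
  have hEW : Y - Ah * Z - ∑ i, Φh i * P i = E - W := by
    rw [hW, hmodel, hsubsum, Matrix.sub_mul]; abel
  -- frobenius expansion
  have hfrob1 : frobNorm (Y - Ah * Z - ∑ i, Φh i * P i) ^ 2
      = fsq E - 2 * (Eᵀ * W).trace + fsq W := by
    rw [hEW, frobNorm_sq', fsq_sub]
  have hfrob2 : frobNorm (Y - A * Z - ∑ i, Φ i * P i) ^ 2 = fsq E := by
    rw [hE, frobNorm_sq']
  rw [hfrob1, hfrob2] at hopt
  have h2T : (0:ℝ) < 1 / (2 * (T:ℝ)) := by positivity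
  have hstep1 : lA * nuclearNorm Ah + ∑ i, l i * nuclearNorm (Φh i)
      ≤ lA * nuclearNorm A + ∑ i, l i * nuclearNorm (Φ i)
        + (1 / (T:ℝ)) * (Eᵀ * W).trace := by
    have hexp : (1 / (2 * (T:ℝ))) * (fsq E - 2 * (Eᵀ * W).trace + fsq W)
        = (1 / (2 * (T:ℝ))) * fsq E - (1 / (T:ℝ)) * (Eᵀ * W).trace
          + (1 / (2 * (T:ℝ))) * fsq W := by
      field_simp
    have hWnn := mul_nonneg h2T.le (fsq_nonneg W)
    linarith [hopt, hexp]
  -- trace decomposition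
  have htr : (Eᵀ * W).trace = ((E * Zᵀ)ᵀ * (Ah - A)).trace
      + ∑ i, ((E * (P i)ᵀ)ᵀ * (Φh i - Φ i)).trace := by
    rw [hW, Matrix.mul_add, Matrix.trace_add, trace_shift, Matrix.mul_sum, Matrix.trace_sum]
    congr 1
    exact Finset.sum_congr rfl fun i _ => trace_shift E (Φh i - Φ i) (P i)
  -- duality bounds
  have hsplitA : Ah - A = ΔA1 + ΔA2 := by rw [hΔA1]; abel
  have hopA : opNorm (E * Zᵀ) ≤ (T:ℝ) * lA / 3 := by
    rw [ge_iff_le, div_mul_eq_mul_div, div_le_iff₀ hT'] at hlA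
    nlinarith [hlA]
  have hbA : ((E * Zᵀ)ᵀ * (Ah - A)).trace
      ≤ ((T:ℝ) * lA / 3) * (nuclearNorm ΔA1 + nuclearNorm ΔA2) := by
    have h1 : ((E * Zᵀ)ᵀ * (Ah - A)).trace ≤ opNorm (E * Zᵀ) * nuclearNorm (Ah - A) :=
      traceInner_le _ _
    have h2 : nuclearNorm (Ah - A) ≤ nuclearNorm ΔA1 + nuclearNorm ΔA2 := by
      rw [hsplitA]; exact nuclearNorm_triangle _ _
    have h3 : opNorm (E * Zᵀ) * nuclearNorm (Ah - A)
        ≤ ((T:ℝ) * lA / 3) * (nuclearNorm ΔA1 + nuclearNorm ΔA2) := by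
      have := opNorm_nonneg' (E * Zᵀ)
      have := nuclearNorm_nonneg (Ah - A)
      nlinarith
    linarith
  have hbi : ∀ i, ((E * (P i)ᵀ)ᵀ * (Φh i - Φ i)).trace
      ≤ ((T:ℝ) * l i / 2) * (nuclearNorm (Δ1 i) + nuclearNorm (Δ2 i)) := by
    intro i
    have hopi : opNorm (E * (P i)ᵀ) ≤ (T:ℝ) * l i / 2 := by
      have hli := hl i
      rw [ge_iff_le, div_mul_eq_mul_div, div_le_iff₀ hT'] at hli
      nlinarith [hli]
    have hspliti : Φh i - Φ i = Δ1 i + Δ2 i := by rw [hΔ1 i]; abel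
    have h1 : ((E * (P i)ᵀ)ᵀ * (Φh i - Φ i)).trace
        ≤ opNorm (E * (P i)ᵀ) * nuclearNorm (Φh i - Φ i) := traceInner_le _ _
    have h2 : nuclearNorm (Φh i - Φ i) ≤ nuclearNorm (Δ1 i) + nuclearNorm (Δ2 i) := by
      rw [hspliti]; exact nuclearNorm_triangle _ _
    have h3 : opNorm (E * (P i)ᵀ) * nuclearNorm (Φh i - Φ i)
        ≤ ((T:ℝ) * l i / 2) * (nuclearNorm (Δ1 i) + nuclearNorm (Δ2 i)) := by
      have := opNorm_nonneg' (E * (P i)ᵀ)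
      have := nuclearNorm_nonneg (Φh i - Φ i)
      nlinarith
    linarith
  -- decomposability lower bounds
  have hlowA : nuclearNorm A + nuclearNorm ΔA2 - nuclearNorm ΔA1 ≤ nuclearNorm Ah := by
    obtain ⟨o1, o2⟩ := ortho_pair A ΔA2 (Ah - A) UkA UcA VkA VcA DA hUkcA hVkcA hAdec hΔA2
    refine nuclear_lower A ΔA2 ΔA1 Ah o1 o2 ?_
    rw [hΔA1]; abel
  have hlowi : ∀ i, nuclearNorm (Φ i) + nuclearNorm (Δ2 i) - nuclearNorm (Δ1 i)
      ≤ nuclearNorm (Φh i) := by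
    intro i
    obtain ⟨o1, o2⟩ := ortho_pair (Φ i) (Δ2 i) (Φh i - Φ i) (Uk i) (Uc i) (Vk i) (Vc i) (D i)
      (hUkc i) (hVkc i) (hΦdec i) (hΔ2 i)
    refine nuclear_lower (Φ i) (Δ2 i) (Δ1 i) (Φh i) o1 o2 ?_
    rw [hΔ1 i]; abel
  -- sum bounds
  have hsum1 : ∑ i, ((E * (P i)ᵀ)ᵀ * (Φh i - Φ i)).trace
      ≤ ((T:ℝ) / 2) * ((∑ i, l i * nuclearNorm (Δ1 i)) + ∑ i, l i * nuclearNorm (Δ2 i)) := by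
    have h1 : ∑ i, ((E * (P i)ᵀ)ᵀ * (Φh i - Φ i)).trace
        ≤ ∑ i, ((T:ℝ) * l i / 2) * (nuclearNorm (Δ1 i) + nuclearNorm (Δ2 i)) :=
      Finset.sum_le_sum fun i _ => hbi i
    have h2 : ∑ i, ((T:ℝ) * l i / 2) * (nuclearNorm (Δ1 i) + nuclearNorm (Δ2 i))
        = ((T:ℝ) / 2) * ((∑ i, l i * nuclearNorm (Δ1 i)) + ∑ i, l i * nuclearNorm (Δ2 i)) := by
      rw [← Finset.sum_add_distrib, Finset.mul_sum]
      exact Finset.sum_congr rfl fun i _ => by ring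
    linarith
  have hsum2 : (∑ i, l i * nuclearNorm (Φ i)) + (∑ i, l i * nuclearNorm (Δ2 i))
      - ∑ i, l i * nuclearNorm (Δ1 i) ≤ ∑ i, l i * nuclearNorm (Φh i) := by
    have h1 : ∑ i, l i * (nuclearNorm (Φ i) + nuclearNorm (Δ2 i) - nuclearNorm (Δ1 i))
        ≤ ∑ i, l i * nuclearNorm (Φh i) :=
      Finset.sum_le_sum fun i _ => mul_le_mul_of_nonneg_left (hlowi i) (hl0 i).le
    have h2 : ∑ i, l i * (nuclearNorm (Φ i) + nuclearNorm (Δ2 i) - nuclearNorm (Δ1 i))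
        = (∑ i, l i * nuclearNorm (Φ i)) + (∑ i, l i * nuclearNorm (Δ2 i))
          - ∑ i, l i * nuclearNorm (Δ1 i) := by
      rw [eq_sub_iff_add_eq, ← Finset.sum_add_distrib, ← Finset.sum_add_distrib]
      exact Finset.sum_congr rfl fun i _ => by ring
    linarith
  -- nonnegativity facts
  have hnA1 : 0 ≤ nuclearNorm ΔA1 := nuclearNorm_nonneg _
  have hnA2 : 0 ≤ nuclearNorm ΔA2 := nuclearNorm_nonneg _
  have hSA : 0 ≤ ∑ i, l i * nuclearNorm (Δ1 i) :=
    Finset.sum_nonneg fun i _ => mul_nonneg (hl0 i).le (nuclearNorm_nonneg _)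
  have hSB : 0 ≤ ∑ i, l i * nuclearNorm (Δ2 i) :=
    Finset.sum_nonneg fun i _ => mul_nonneg (hl0 i).le (nuclearNorm_nonneg _)
  -- combine
  have hmulA : lA * (nuclearNorm A + nuclearNorm ΔA2 - nuclearNorm ΔA1)
      ≤ lA * nuclearNorm Ah := mul_le_mul_of_nonneg_left hlowA hlA0.le
  have hid : (1 / (T:ℝ)) * (((T:ℝ) * lA / 3) * (nuclearNorm ΔA1 + nuclearNorm ΔA2)
        + ((T:ℝ) / 2) * ((∑ i, l i * nuclearNorm (Δ1 i)) + ∑ i, l i * nuclearNorm (Δ2 i)))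
      = (lA / 3) * (nuclearNorm ΔA1 + nuclearNorm ΔA2)
        + (1 / 2) * ((∑ i, l i * nuclearNorm (Δ1 i)) + ∑ i, l i * nuclearNorm (Δ2 i)) := by
    field_simp
  have htrb : (Eᵀ * W).trace
      ≤ ((T:ℝ) * lA / 3) * (nuclearNorm ΔA1 + nuclearNorm ΔA2)
        + ((T:ℝ) / 2) * ((∑ i, l i * nuclearNorm (Δ1 i)) + ∑ i, l i * nuclearNorm (Δ2 i)) := by
    rw [htr]; linarith
  have hT1 : (0:ℝ) < 1 / (T:ℝ) := by positivity
  have hfin : (1 / (T:ℝ)) * (Eᵀ * W).trace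
      ≤ (lA / 3) * (nuclearNorm ΔA1 + nuclearNorm ΔA2)
        + (1 / 2) * ((∑ i, l i * nuclearNorm (Δ1 i)) + ∑ i, l i * nuclearNorm (Δ2 i)) := by
    rw [← hid]
    exact mul_le_mul_of_nonneg_left htrb hT1.le
  nlinarith [hstep1, hsum2, hmulA, hfin, mul_nonneg hlA0.le hnA1, mul_nonneg hlA0.le hnA2,
    hSA, hSB]
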